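/- For every fixed Γ > 1, the map a ↦ K(a,Γ) is strictly decreasing on [0,1); i.e., for SNR above one the error exponent decreases monotonically as the correlation between samples increases. -/

import Mathlib

/-- The steady-state prediction error variance `P(a, Γ)`: the unique positive root of
`P² + (1 − a²)(1 − Γ)P − Γ(1 − a²) = 0`, given in closed form. -/
noncomputable def Pss (a Γ : ℝ) : ℝ :=
  ((1 - a ^ 2) * (Γ - 1) +
    Real.sqrt ((1 - a ^ 2) ^ 2 * (1 - Γ) ^ 2 + 4 * Γ * (1 - a ^ 2))) / 2

/-- The steady-state Kalman gain factor `K_p = a·P/(1+P)`. -/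
noncomputable def Kgain (a Γ : ℝ) : ℝ := a * Pss a Γ / (1 + Pss a Γ)

/-- `P̃ = K_p²/(1 − (a − K_p)²)`, the solution of the Lyapunov equation. -/
noncomputable def Ptilde (a Γ : ℝ) : ℝ :=
  (Kgain a Γ) ^ 2 / (1 - (a - Kgain a Γ) ^ 2)

/-- The closed-form error exponent `K(a, Γ) = ½·log(1+P) + ½·(1+P̃)/(1+P) − ½`. -/
noncomputable def Kexp (a Γ : ℝ) : ℝ :=
  (1 / 2) * Real.log (1 + Pss a Γ) + (1 / 2) * (1 + Ptilde a Γ) / (1 + Pss a Γ) - 1 / 2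

/- ### Auxiliary lemmas -/

lemma Pss_pos {a Γ : ℝ} (hΓ : 1 < Γ) (ha0 : 0 ≤ a) (ha1 : a < 1) : 0 < Pss a Γ := by
  have ht : 0 < 1 - a ^ 2 := by nlinarith
  have hs : 0 ≤ Real.sqrt ((1 - a ^ 2) ^ 2 * (1 - Γ) ^ 2 + 4 * Γ * (1 - a ^ 2)) :=
    Real.sqrt_nonneg _
  unfold Pss
  nlinarith [mul_pos ht (show 0 < Γ - 1 by linarith)]

lemma Pss_riccati {a Γ : ℝ} (hΓ : 1 < Γ) (ha0 : 0 ≤ a) (ha1 : a < 1) :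
    (Pss a Γ) ^ 2 = (1 - a ^ 2) * (Γ + (Γ - 1) * Pss a Γ) := by
  have ht : 0 < 1 - a ^ 2 := by nlinarith
  have harg : 0 ≤ (1 - a ^ 2) ^ 2 * (1 - Γ) ^ 2 + 4 * Γ * (1 - a ^ 2) := by
    nlinarith [sq_nonneg ((1 - a ^ 2) * (1 - Γ))]
  have hs := Real.sq_sqrt harg
  unfold Pss
  linear_combination hs / 4

lemma Pss_le {a Γ : ℝ} (hΓ : 1 < Γ) (ha0 : 0 ≤ a) (ha1 : a < 1) : Pss a Γ ≤ Γ := by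
  have hp := Pss_pos hΓ ha0 ha1
  have hQ := Pss_riccati hΓ ha0 ha1
  have ht : 0 < 1 - a ^ 2 := by nlinarith
  have hQpos : 0 < Γ + (Γ - 1) * Pss a Γ := by nlinarith
  have h1 : (Pss a Γ) ^ 2 ≤ Γ + (Γ - 1) * Pss a Γ := by nlinarith
  nlinarith

lemma Pss_anti {a b Γ : ℝ} (hΓ : 1 < Γ) (ha0 : 0 ≤ a) (hb1 : b < 1) (hab : a < b) :
    Pss b Γ < Pss a Γ := by
  have hab2 : a ^ 2 < b ^ 2 := by nlinarith
  have htb : 0 < 1 - b ^ 2 := by nlinarith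
  have harga : 0 ≤ (1 - a ^ 2) ^ 2 * (1 - Γ) ^ 2 + 4 * Γ * (1 - a ^ 2) := by
    nlinarith [sq_nonneg ((1 - a ^ 2) * (1 - Γ))]
  have hdiff : 0 ≤ ((1 - a ^ 2) ^ 2 * (1 - Γ) ^ 2 + 4 * Γ * (1 - a ^ 2))
      - ((1 - b ^ 2) ^ 2 * (1 - Γ) ^ 2 + 4 * Γ * (1 - b ^ 2)) := by
    have h1 : 0 ≤ (1 - Γ) ^ 2 * ((b ^ 2 - a ^ 2) * (2 - a ^ 2 - b ^ 2)) :=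
      mul_nonneg (sq_nonneg _) (by nlinarith)
    nlinarith
  have hsq : Real.sqrt ((1 - b ^ 2) ^ 2 * (1 - Γ) ^ 2 + 4 * Γ * (1 - b ^ 2))
      ≤ Real.sqrt ((1 - a ^ 2) ^ 2 * (1 - Γ) ^ 2 + 4 * Γ * (1 - a ^ 2)) :=
    Real.sqrt_le_sqrt (by linarith)
  have hlin : (1 - b ^ 2) * (Γ - 1) < (1 - a ^ 2) * (Γ - 1) := by nlinarith
  unfold Pss
  linarith

lemma Kexp_eq {a Γ : ℝ} (hΓ : 1 < Γ) (ha0 : 0 ≤ a) (ha1 : a < 1) :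
    Kexp a Γ = (1 / 2) * Real.log (1 + Pss a Γ)
      + (1 / 2) * ((-(Pss a Γ) ^ 2 + (2 * Γ - 1) * Pss a Γ + 2 * Γ)
          / ((Γ - 1) * (Pss a Γ) ^ 2 + (3 * Γ - 1) * Pss a Γ + 2 * Γ)) - 1 / 2 := by
  set p := Pss a Γ with hpdef
  have hp : 0 < p := Pss_pos hΓ ha0 ha1
  have hQ : p ^ 2 = (1 - a ^ 2) * (Γ + (Γ - 1) * p) := Pss_riccati hΓ ha0 ha1
  have h1p : 0 < 1 + p := by linarith
  have ha2 : a ^ 2 < 1 := by nlinarith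
  have hD : 0 < (1 + p) ^ 2 - a ^ 2 := by nlinarith
  have hB : 0 < (Γ - 1) * p ^ 2 + (3 * Γ - 1) * p + 2 * Γ := by
    nlinarith [mul_pos (show (0:ℝ) < Γ - 1 by linarith) (mul_pos hp hp)]
  have hPt : Ptilde a Γ = a ^ 2 * p ^ 2 / ((1 + p) ^ 2 - a ^ 2) := by
    unfold Ptilde Kgain
    rw [← hpdef]
    rw [div_eq_div_iff ?h1 (ne_of_gt hD)]
    · field_simp
      ring
    · have h2 : 1 - (a - a * p / (1 + p)) ^ 2 = ((1 + p) ^ 2 - a ^ 2) / (1 + p) ^ 2 := by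
        field_simp
        ring
      rw [h2]
      positivity
  have key2 : ((1 + p) ^ 2 - a ^ 2 + a ^ 2 * p ^ 2) * ((Γ - 1) * p ^ 2 + (3 * Γ - 1) * p + 2 * Γ)
      = (-(p ^ 2) + (2 * Γ - 1) * p + 2 * Γ) * (1 + p) * ((1 + p) ^ 2 - a ^ 2) := by
    linear_combination (p * (1 + p) ^ 2) * hQ
  have hmid : (1 / 2) * (1 + Ptilde a Γ) / (1 + p)
      = (1 / 2) * ((-(p ^ 2) + (2 * Γ - 1) * p + 2 * Γ)
          / ((Γ - 1) * p ^ 2 + (3 * Γ - 1) * p + 2 * Γ)) := by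
    rw [hPt]
    have h3 : (1 : ℝ) + a ^ 2 * p ^ 2 / ((1 + p) ^ 2 - a ^ 2)
        = ((1 + p) ^ 2 - a ^ 2 + a ^ 2 * p ^ 2) / ((1 + p) ^ 2 - a ^ 2) := by
      field_simp
    rw [h3]
    have h4 : (((1 + p) ^ 2 - a ^ 2 + a ^ 2 * p ^ 2) / ((1 + p) ^ 2 - a ^ 2)) / (1 + p)
        = (-(p ^ 2) + (2 * Γ - 1) * p + 2 * Γ)
            / ((Γ - 1) * p ^ 2 + (3 * Γ - 1) * p + 2 * Γ) := by
      rw [div_div, div_eq_div_iff (by positivity) (ne_of_gt hB)]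
      linear_combination key2
    rw [mul_div_assoc, h4]
  unfold Kexp
  rw [← hpdef, hmid]

/-- The key polynomial inequality: the rational part plus the log lower bound increment
is strictly increasing. -/
lemma key_ineq {Γ p q : ℝ} (hΓ : 1 < Γ) (hp : 0 < p) (hpq : p < q) (hqG : q ≤ Γ) :
    (-(p ^ 2) + (2 * Γ - 1) * p + 2 * Γ) / ((Γ - 1) * p ^ 2 + (3 * Γ - 1) * p + 2 * Γ)
      < (q - p) / (1 + q)
        + (-(q ^ 2) + (2 * Γ - 1) * q + 2 * Γ)
            / ((Γ - 1) * q ^ 2 + (3 * Γ - 1) * q + 2 * Γ) := by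
  have hq : 0 < q := hp.trans hpq
  have hBp : 0 < (Γ - 1) * p ^ 2 + (3 * Γ - 1) * p + 2 * Γ := by
    nlinarith [mul_pos (show (0:ℝ) < Γ - 1 by linarith) (mul_pos hp hp)]
  have hBq : 0 < (Γ - 1) * q ^ 2 + (3 * Γ - 1) * q + 2 * Γ := by
    nlinarith [mul_pos (show (0:ℝ) < Γ - 1 by linarith) (mul_pos hq hq)]
  have h1q : 0 < 1 + q := by linarith
  obtain ⟨d, hd, rfl⟩ : ∃ d, 0 < d ∧ q = p + d := ⟨q - p, by linarith, by ring⟩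
  obtain ⟨u, hu, rfl⟩ : ∃ u, 0 ≤ u ∧ Γ = p + d + u := ⟨Γ - (p + d), by linarith, by ring⟩
  rw [div_add_div _ _ (ne_of_gt h1q) (ne_of_gt hBq), div_lt_div_iff₀ hBp (by positivity)]
  have hv : 0 < p + d + u - 1 := by linarith
  have hE : 0 < p*d + 2*p*d^2 + p*d^3 + p^2 + 5*p^2*d + 5*p^2*d^2 + p^2*d^3 + 3*p^3
      + 7*p^3*d + 3*p^3*d^2 + 3*p^4 + 3*p^4*d + p^5 := by positivity
  have hR : 0 ≤ 2*u^2 + 2*d*u + 2*d*u^2 + 2*d^2*u + 6*p*u^2 + 5*p*d*u + 5*p*d*u^2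
      + 4*p*d^2*u + p*d^2*u^2 + p*d^3*u + p^2*u + 7*p^2*u^2 + 7*p^2*d*u + 5*p^2*d*u^2
      + 5*p^2*d^2*u + p^2*d^2*u^2 + p^2*d^3*u + 3*p^3*u + 4*p^3*u^2 + 7*p^3*d*u
      + 2*p^3*d*u^2 + 3*p^3*d^2*u + 3*p^4*u + p^4*u^2 + 3*p^4*d*u + p^5*u := by positivity
  nlinarith [mul_pos hv hE]

/-- For every fixed `Γ > 1`, the map `a ↦ K(a,Γ)` is strictly decreasing on `[0,1)`:
for SNR above one the error exponent decreases monotonically with correlation. -/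
theorem errorExponent_strictAntiOn_of_snr_gt_one (Γ : ℝ) (hΓ : 1 < Γ) :
    StrictAntiOn (fun a => Kexp a Γ) (Set.Ico (0 : ℝ) 1) := by
  intro a ha b hb hab
  obtain ⟨ha0, ha1⟩ := ha
  obtain ⟨hb0, hb1⟩ := hb
  simp only
  rw [Kexp_eq hΓ ha0 ha1, Kexp_eq hΓ hb0 hb1]
  set p := Pss b Γ with hp'
  set q := Pss a Γ with hq'
  have hp : 0 < p := Pss_pos hΓ hb0 hb1
  have hpq : p < q := Pss_anti hΓ ha0 hb1 hab
  have hqG : q ≤ Γ := Pss_le hΓ ha0 ha1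
  have h1q : (0 : ℝ) < 1 + q := by linarith
  have hlog : Real.log (1 + p) - Real.log (1 + q) ≤ (p - q) / (1 + q) := by
    have h0 : (0 : ℝ) < (1 + p) / (1 + q) := by positivity
    have h1 := Real.log_le_sub_one_of_pos h0
    rw [Real.log_div (by linarith) (by linarith)] at h1
    have h2 : (1 + p) / (1 + q) - 1 = (p - q) / (1 + q) := by field_simp; ring
    linarith
  have hfrac := key_ineq hΓ hp hpq hqG
  have hneg : (p - q) / (1 + q) = -((q - p) / (1 + q)) := by ring
  linarith
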